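/- Any decision rule d̃ : X → {0,1} depending only on X (not on Z) that satisfies a CV constraint q_a − q_b ≤ γ achieves immediate utility u(d̃, 1/2) at most that of the optimal per-group-threshold rule d* satisfying the same constraint with the same realized rates (q_a, q_b); i.e., group-blind rules are weakly dominated by per-group-threshold rules under impact-parity constraints. -/

import Mathlib

open MeasureTheory

/-- Set integral of a {0,1}-valued function equals the measure of its support
intersected with the set. -/
lemma setIntegral_of_zero_one {Ω : Type*} [MeasurableSpace Ω] (μ : Measure Ω)
    (f : Ω → ℝ) (hf : Measurable f) (h01 : ∀ ω, f ω = 0 ∨ f ω = 1)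
    {S : Set Ω} (hS : MeasurableSet S) :
    ∫ ω in S, f ω ∂μ = (μ ({ω | f ω = 1} ∩ S)).toReal := by
  have hA : MeasurableSet {ω | f ω = 1} := hf (measurableSet_singleton 1)
  have hfe : ∀ ω, f ω = Set.indicator {ω | f ω = 1} (fun _ => (1 : ℝ)) ω := by
    intro ω
    by_cases hm : f ω = 1
    · simp [Set.indicator_apply, Set.mem_setOf_eq, hm]
    · have h0 : f ω = 0 := (h01 ω).resolve_right hm
      simp [Set.indicator_apply, Set.mem_setOf_eq, hm, h0]
  calc ∫ ω in S, f ω ∂μ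
      = ∫ ω in S, Set.indicator {ω | f ω = 1} (fun _ => (1 : ℝ)) ω ∂μ := by
        simp only [← hfe]
    _ = ∫ ω in S ∩ {ω | f ω = 1}, (1 : ℝ) ∂μ := setIntegral_indicator hA
    _ = (μ ({ω | f ω = 1} ∩ S)).toReal := by
        rw [setIntegral_const, Set.inter_comm]; simp; rfl

/-- Any group-blind decision rule `d̃ : 𝒳 → {0,1}` (depending
only on `X`) satisfying the CV constraint `q_a − q_b ≤ γ` achieves immediate
utility at most that of the per-group-threshold rule `d*` realizing the same
group-wise rates `(q_a, q_b)` (groups `true = a`, `false = b`). -/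
theorem group_blind_dominated_by_threshold
    {Ω 𝒳 : Type*} [MeasurableSpace Ω] [MeasurableSpace 𝒳]
    (μ : Measure Ω) [IsProbabilityMeasure μ]
    (X : Ω → 𝒳) (Z : Ω → Bool)
    (hX : Measurable X) (hZ : Measurable Z)
    (p : 𝒳 → Bool → ℝ) (hp : ∀ z, Measurable fun x => p x z)
    (hp01 : ∀ x z, p x z ∈ Set.Icc (0 : ℝ) 1)
    (hZpos : ∀ z, 0 < (μ {ω | Z ω = z}).toReal)
    (hatomless : ∀ z r, μ ({ω | p (X ω) (Z ω) = r} ∩ {ω | Z ω = z}) = 0)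
    (γ : ℝ)
    (dblind : 𝒳 → ℝ)
    (hblind01 : ∀ x, dblind x = 0 ∨ dblind x = 1)
    (hblindmeas : Measurable dblind)
    (q : Bool → ℝ)
    -- realized group-wise rates of the group-blind rule
    (hqrates : ∀ z, (μ ({ω | dblind (X ω) = 1} ∩ {ω | Z ω = z})).toReal
        / (μ {ω | Z ω = z}).toReal = q z)
    -- CV (impact-parity) constraint satisfied by the group-blind rule
    (hCV : q true - q false ≤ γ)
    (t : Bool → ℝ)
    (dstar : 𝒳 → Bool → ℝ)
    (hdstar : ∀ x z, dstar x z = if t z ≤ p x z then 1 else 0)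
    -- d* is the per-group-threshold rule realizing the same rates (q_a, q_b)
    (hstarrates : ∀ z, (μ ({ω | dstar (X ω) (Z ω) = 1} ∩ {ω | Z ω = z})).toReal
        / (μ {ω | Z ω = z}).toReal = q z) :
    ∫ ω, dblind (X ω) * (p (X ω) (Z ω) - 1 / 2) ∂μ
      ≤ ∫ ω, dstar (X ω) (Z ω) * (p (X ω) (Z ω) - 1 / 2) ∂μ := by
  -- abbreviations
  have hcomp : ∀ (g : 𝒳 → Bool → ℝ), (∀ z, Measurable fun x => g x z) →
      Measurable fun ω => g (X ω) (Z ω) := by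
    intro g hg
    have he : (fun ω => g (X ω) (Z ω))
        = fun ω => if Z ω = true then g (X ω) true else g (X ω) false := by
      funext ω; cases hz : Z ω <;> simp [hz]
    rw [he]
    exact Measurable.ite (hZ (measurableSet_singleton true))
      ((hg true).comp hX) ((hg false).comp hX)
  have hdsm : ∀ z, Measurable fun x => dstar x z := by
    intro z
    have : (fun x => dstar x z) = fun x => if t z ≤ p x z then (1 : ℝ) else 0 := by
      funext x; exact hdstar x z
    rw [this]
    exact Measurable.ite (measurableSet_le measurable_const (hp z))
      measurable_const measurable_const
  have hDmeas : Measurable fun ω => dstar (X ω) (Z ω) := hcomp dstar hdsm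
  have hBmeas : Measurable fun ω => dblind (X ω) := hblindmeas.comp hX
  have hPmeas : Measurable fun ω => p (X ω) (Z ω) := hcomp p hp
  have hD01 : ∀ ω, dstar (X ω) (Z ω) = 0 ∨ dstar (X ω) (Z ω) = 1 := by
    intro ω; rw [hdstar]; split <;> simp
  have hB01 : ∀ ω, dblind (X ω) = 0 ∨ dblind (X ω) = 1 := fun ω => hblind01 (X ω)
  have hBrange : ∀ ω, 0 ≤ dblind (X ω) ∧ dblind (X ω) ≤ 1 := by
    intro ω; rcases hB01 ω with h | h <;> rw [h] <;> norm_num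
  -- integrability
  have hint : ∀ (f : Ω → ℝ), Measurable f → (∀ ω, |f ω| ≤ 2) → Integrable f μ := by
    intro f hf hb
    exact (integrable_const (2 : ℝ)).mono' hf.aestronglyMeasurable
      (Filter.Eventually.of_forall hb)
  have habs : ∀ a b : ℝ, (a = 0 ∨ a = 1) → 0 ≤ b → b ≤ 1 → |a * (b - 1 / 2)| ≤ 2 := by
    intro a b ha hb0 hb1
    rcases ha with h | h <;> rw [h] <;> rw [abs_le] <;> constructor <;> nlinarith
  have hintD : Integrable (fun ω => dstar (X ω) (Z ω) * (p (X ω) (Z ω) - 1 / 2)) μ := by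
    refine hint _ (hDmeas.mul (hPmeas.sub measurable_const)) fun ω => ?_
    exact habs _ _ (hD01 ω) (hp01 (X ω) (Z ω)).1 (hp01 (X ω) (Z ω)).2
  have hintB : Integrable (fun ω => dblind (X ω) * (p (X ω) (Z ω) - 1 / 2)) μ := by
    refine hint _ (hBmeas.mul (hPmeas.sub measurable_const)) fun ω => ?_
    exact habs _ _ (hB01 ω) (hp01 (X ω) (Z ω)).1 (hp01 (X ω) (Z ω)).2
  have hintDf : Integrable (fun ω => dstar (X ω) (Z ω)) μ := by
    refine hint _ hDmeas fun ω => ?_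
    rcases hD01 ω with h | h <;> rw [h] <;> norm_num
  have hintBf : Integrable (fun ω => dblind (X ω)) μ := by
    refine hint _ hBmeas fun ω => ?_
    rcases hB01 ω with h | h <;> rw [h] <;> norm_num
  -- the difference function
  set G : Ω → ℝ := fun ω => (dstar (X ω) (Z ω) - dblind (X ω)) * (p (X ω) (Z ω) - 1 / 2)
    with hGdef
  have hintG : Integrable G μ := by
    have : G = fun ω => dstar (X ω) (Z ω) * (p (X ω) (Z ω) - 1 / 2)
        - dblind (X ω) * (p (X ω) (Z ω) - 1 / 2) := by
      funext ω; simp only [hGdef]; ring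
    rw [this]; exact hintD.sub hintB
  -- measurable group sets
  have hSmeas : ∀ z, MeasurableSet {ω | Z ω = z} := fun z =>
    hZ (measurableSet_singleton z)
  -- within each group, the integral of G is nonnegative
  have hgroup : ∀ z, 0 ≤ ∫ ω in {ω | Z ω = z}, G ω ∂μ := by
    intro z
    have hsplit : ∀ ω, G ω = (dstar (X ω) (Z ω) - dblind (X ω)) * (p (X ω) (Z ω) - t z)
        + (t z - 1 / 2) * (dstar (X ω) (Z ω) - dblind (X ω)) := by
      intro ω; simp only [hGdef]; ring
    have hint2 : Integrable
        (fun ω => (t z - 1 / 2) * (dstar (X ω) (Z ω) - dblind (X ω))) μ :=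
      (hintDf.sub hintBf).const_mul _
    have hint1 : Integrable
        (fun ω => (dstar (X ω) (Z ω) - dblind (X ω)) * (p (X ω) (Z ω) - t z)) μ := by
      have he : (fun ω => (dstar (X ω) (Z ω) - dblind (X ω)) * (p (X ω) (Z ω) - t z))
          = fun ω => G ω - (t z - 1 / 2) * (dstar (X ω) (Z ω) - dblind (X ω)) := by
        funext ω; simp only [hGdef]; ring
      rw [he]; exact hintG.sub hint2
    simp only [hsplit]
    rw [integral_add (hint1.restrict) (hint2.restrict)]
    have h1 : 0 ≤ ∫ ω in {ω | Z ω = z},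
        (dstar (X ω) (Z ω) - dblind (X ω)) * (p (X ω) (Z ω) - t z) ∂μ := by
      refine setIntegral_nonneg (hSmeas z) fun ω hω => ?_
      have hz : Z ω = z := hω
      rw [hz, hdstar (X ω) z]
      by_cases hle : t z ≤ p (X ω) z
      · rw [if_pos hle]
        have := (hBrange ω).2
        nlinarith
      · rw [if_neg hle]
        have := (hBrange ω).1
        push_neg at hle
        nlinarith
    have h2 : ∫ ω in {ω | Z ω = z},
        (t z - 1 / 2) * (dstar (X ω) (Z ω) - dblind (X ω)) ∂μ = 0 := by
      have hrw : ∫ ω in {ω | Z ω = z}, (dstar (X ω) (Z ω) - dblind (X ω)) ∂μ = 0 := by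
        rw [integral_sub (hintDf.restrict) (hintBf.restrict)]
        rw [setIntegral_of_zero_one μ _ hDmeas hD01 (hSmeas z),
            setIntegral_of_zero_one μ _ hBmeas hB01 (hSmeas z)]
        have hm := (hZpos z).ne'
        have hq1 := hqrates z
        have hq2 := hstarrates z
        rw [div_eq_iff hm] at hq1 hq2
        rw [hq1, hq2, sub_self]
      calc ∫ ω in {ω | Z ω = z}, (t z - 1 / 2) * (dstar (X ω) (Z ω) - dblind (X ω)) ∂μ
          = (t z - 1 / 2) * ∫ ω in {ω | Z ω = z},
              (dstar (X ω) (Z ω) - dblind (X ω)) ∂μ := integral_const_mul _ _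
        _ = 0 := by rw [hrw, mul_zero]
    linarith
  -- combine the two groups
  have hcompl : {ω | Z ω = true}ᶜ = {ω | Z ω = false} := by
    ext ω; simp
  have hGnonneg : 0 ≤ ∫ ω, G ω ∂μ := by
    rw [← integral_add_compl (hSmeas true) hintG, hcompl]
    have := hgroup true
    have := hgroup false
    linarith
  have hGsub : ∫ ω, G ω ∂μ = (∫ ω, dstar (X ω) (Z ω) * (p (X ω) (Z ω) - 1 / 2) ∂μ)
      - ∫ ω, dblind (X ω) * (p (X ω) (Z ω) - 1 / 2) ∂μ := by
    rw [← integral_sub hintD hintB]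
    congr 1; funext ω; simp only [hGdef]; ring
  linarith [hGsub ▸ hGnonneg]
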